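/- Let p ∈ (1,∞), R > 0 and α ∈ ℝ. Define μₚ([0,2R],α) as the infimum of ∫₀^{2R} |u'(t)|^p dt + α(|u(0)|^p + |u(2R)|^p) over all Lipschitz functions u on [0,2R] with ∫₀^{2R} |u(t)|^p dt = 1, and define λ̄ₚ([0,R],1,α) as the infimum of ∫₀ᴿ |u'(t)|^p dt + α|u(0)|^p over all Lipschitz functions u on [0,R] with ∫₀ᴿ |u(t)|^p dt = 1. Then μₚ([0,2R],α) = λ̄ₚ([0,R],1,α). -/

import Mathlib

open Set MeasureTheory

/-- The first Robin eigenvalue `μₚ([0,L],α)` of the one-dimensional `p`-Laplacian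
problem on `[0,L]` with Robin parameter `α` at both endpoints, defined
variationally. -/
noncomputable def robinRobinEig (p L α : ℝ) : ℝ :=
  sInf {E : ℝ | ∃ u : ℝ → ℝ, (∃ K : NNReal, LipschitzOnWith K u (Set.Icc 0 L)) ∧
    (∫ t in (0:ℝ)..L, |u t| ^ p) = 1 ∧
    E = (∫ t in (0:ℝ)..L, |deriv u t| ^ p) + α * (|u 0| ^ p + |u L| ^ p)}

/-- The first eigenvalue `λ̄ₚ([0,R],1,α)` of the one-dimensional Robin–Neumann
problem on `[0,R]` with constant weight `1`, defined variationally. -/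
noncomputable def robinNeumannEig (p R α : ℝ) : ℝ :=
  sInf {E : ℝ | ∃ u : ℝ → ℝ, (∃ K : NNReal, LipschitzOnWith K u (Set.Icc 0 R)) ∧
    (∫ t in (0:ℝ)..R, |u t| ^ p) = 1 ∧
    E = (∫ t in (0:ℝ)..R, |deriv u t| ^ p) + α * |u 0| ^ p}


lemma abs_deriv_le_of_lipschitzOn {K : NNReal} {a b : ℝ} {u : ℝ → ℝ}
    (h : LipschitzOnWith K u (Set.Icc a b)) {t : ℝ} (ht : t ∈ Set.Ioo a b) :
    |deriv u t| ≤ K := by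
  by_cases hd : DifferentiableAt ℝ u t
  · have hda : HasDerivAt u (deriv u t) t := hd.hasDerivAt
    rw [hasDerivAt_iff_tendsto_slope] at hda
    have hev : ∀ᶠ s in nhdsWithin t {t}ᶜ, |slope u t s| ≤ (K : ℝ) := by
      filter_upwards [inter_mem_nhdsWithin {t}ᶜ (Ioo_mem_nhds ht.1 ht.2)] with s hs
      rcases hs with ⟨hs1, hs2⟩
      have hst : s ≠ t := hs1
      have hpos : 0 < |s - t| := abs_pos.mpr (sub_ne_zero.mpr hst)
      have h1 : |u s - u t| ≤ (K : ℝ) * |s - t| := by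
        have := h.dist_le_mul s (Set.mem_Icc_of_Ioo hs2) t (Set.mem_Icc_of_Ioo ht)
        simpa [Real.dist_eq] using this
      rw [slope_def_field, abs_div, div_le_iff₀ hpos]
      exact h1
    exact le_of_tendsto hda.abs hev
  · simp [deriv_zero_of_not_differentiableAt hd]

lemma intervalIntegrable_abs_deriv_rpow {K : NNReal} {a b c d p : ℝ} {u : ℝ → ℝ}
    (hp : 0 ≤ p)
    (h : LipschitzOnWith K u (Set.Icc a b)) (hac : a ≤ c) (hcd : c ≤ d) (hdb : d ≤ b) :
    IntervalIntegrable (fun t => |deriv u t| ^ p) volume c d := by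
  rw [intervalIntegrable_iff_integrableOn_Ioc_of_le hcd]
  have hmeas : Measurable (fun t => |deriv u t| ^ p) :=
    (Real.continuous_rpow_const hp).measurable.comp (measurable_deriv u).abs
  refine Integrable.mono' (g := fun _ => (K : ℝ) ^ p) ?_ hmeas.aestronglyMeasurable ?_
  · exact integrableOn_const measure_Ioc_lt_top.ne
  · have hmem : ∀ᵐ t ∂(volume.restrict (Set.Ioc c d)), t ∈ Set.Ioc c d :=
      ae_restrict_mem measurableSet_Ioc
    have hb : ∀ᵐ t ∂(volume.restrict (Set.Ioc c d)), t ≠ b := by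
      refine ae_restrict_of_ae ?_
      exact (ae_iff).mpr (by simpa using measure_singleton (α := ℝ) b)
    filter_upwards [hmem, hb] with t ht htb
    have hIoo : t ∈ Set.Ioo a b := ⟨lt_of_le_of_lt hac ht.1, lt_of_le_of_ne (le_trans ht.2 hdb) htb⟩
    have h1 : |deriv u t| ≤ (K : ℝ) := abs_deriv_le_of_lipschitzOn h hIoo
    have h2 : ‖|deriv u t| ^ p‖ = |deriv u t| ^ p := by
      rw [Real.norm_eq_abs, abs_of_nonneg (Real.rpow_nonneg (abs_nonneg _) p)]
    rw [h2]
    exact Real.rpow_le_rpow (abs_nonneg _) h1 hp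

lemma eq_zero_of_integral_abs_rpow_eq_zero {a b p : ℝ} (hab : a < b) (hp : 0 < p)
    {f : ℝ → ℝ} (hf : ContinuousOn f (Set.Icc a b))
    (h0 : (∫ t in a..b, |f t| ^ p) = 0) : ∀ x ∈ Set.Icc a b, f x = 0 := by
  set g : ℝ → ℝ := fun t => |f t| ^ p with hg_def
  have hg : ContinuousOn g (Set.Icc a b) :=
    (hf.abs).rpow_const (fun x _ => Or.inr hp.le)
  have hgi : IntegrableOn g (Set.Ioc a b) volume :=
    (hg.integrableOn_Icc).mono_set Set.Ioc_subset_Icc_self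
  have h0' : ∫ t in Set.Ioc a b, g t = 0 := by
    rwa [intervalIntegral.integral_of_le hab.le] at h0
  have hgnn : (0 : ℝ → ℝ) ≤ g := fun t => Real.rpow_nonneg (abs_nonneg _) p
  have hae : g =ᵐ[volume.restrict (Set.Ioc a b)] 0 :=
    (integral_eq_zero_iff_of_nonneg hgnn hgi).mp h0'
  have hae' : ∀ᵐ t ∂(volume : Measure ℝ), t ∈ Set.Ioc a b → g t = 0 :=
    (ae_restrict_iff' measurableSet_Ioc).mp hae
  intro x hx
  by_contra hfx
  have hgx : 0 < g x := Real.rpow_pos_of_pos (abs_pos.mpr hfx) p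
  have hc : ContinuousWithinAt g (Set.Icc a b) x := hg x hx
  have hU : g ⁻¹' Set.Ioi 0 ∈ nhdsWithin x (Set.Icc a b) := hc (Ioi_mem_nhds hgx)
  rcases mem_nhdsWithin.mp hU with ⟨V, hVopen, hxV, hVsub⟩
  have hxcl : x ∈ closure (Set.Ioo a b) := by
    rw [closure_Ioo hab.ne]; exact hx
  have hne : (V ∩ Set.Ioo a b).Nonempty :=
    (mem_closure_iff.mp hxcl) V hVopen hxV
  have hopen : IsOpen (V ∩ Set.Ioo a b) := hVopen.inter isOpen_Ioo
  have hpos : 0 < volume (V ∩ Set.Ioo a b) := hopen.measure_pos volume hne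
  have hsub : V ∩ Set.Ioo a b ⊆ {t | ¬(t ∈ Set.Ioc a b → g t = 0)} := by
    intro t ⟨htV, htIoo⟩
    have : t ∈ Set.Icc a b := Set.mem_Icc_of_Ioo htIoo
    have hgt : g t ∈ Set.Ioi (0:ℝ) := hVsub ⟨htV, this⟩
    intro hcontra
    have h1 : (0:ℝ) < g t := hgt
    exact (ne_of_gt h1) (hcontra ⟨htIoo.1, htIoo.2.le⟩)
  have : volume (V ∩ Set.Ioo a b) = 0 :=
    measure_mono_null hsub hae'
  exact absurd this hpos.ne'

lemma rpow_neginv_rpow {N p : ℝ} (hN : 0 < N) (hp : p ≠ 0) :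
    (N ^ (-(1/p))) ^ p = N⁻¹ := by
  rw [← Real.rpow_mul hN.le]
  have : -(1/p) * p = -1 := by field_simp
  rw [this, Real.rpow_neg_one]

lemma lipschitzOnWith_const_mul {K : NNReal} {s : Set ℝ} {f : ℝ → ℝ} (c : ℝ)
    (h : LipschitzOnWith K f s) :
    LipschitzOnWith (Real.nnabs c * K) (fun t => c * f t) s := by
  have hc : LipschitzWith (Real.nnabs c) (fun x : ℝ => c * x) := by
    apply LipschitzWith.of_dist_le_mul
    intro x y
    rw [Real.dist_eq, Real.dist_eq, ← mul_sub, abs_mul]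
    simp [Real.coe_nnabs]
  exact hc.comp_lipschitzOnWith h

lemma normalized_mem {p R α : ℝ} (hp : 1 < p) (hR : 0 < R) {w : ℝ → ℝ} {K : NNReal}
    (hK : LipschitzOnWith K w (Set.Icc 0 R))
    (hN : 0 < (∫ t in (0:ℝ)..R, |w t| ^ p)) :
    (∫ t in (0:ℝ)..R, |w t| ^ p)⁻¹ * ((∫ t in (0:ℝ)..R, |deriv w t| ^ p) + α * |w 0| ^ p) ∈
      {E : ℝ | ∃ u : ℝ → ℝ, (∃ K : NNReal, LipschitzOnWith K u (Set.Icc 0 R)) ∧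
        (∫ t in (0:ℝ)..R, |u t| ^ p) = 1 ∧
        E = (∫ t in (0:ℝ)..R, |deriv u t| ^ p) + α * |u 0| ^ p} := by
  set N := (∫ t in (0:ℝ)..R, |w t| ^ p) with hNdef
  have hp0 : p ≠ 0 := by positivity
  set c := N ^ (-(1/p)) with hcdef
  have hc0 : 0 < c := Real.rpow_pos_of_pos hN _
  have hcp : c ^ p = N⁻¹ := rpow_neginv_rpow hN hp0
  have key : ∀ x : ℝ, |c * x| ^ p = N⁻¹ * |x| ^ p := fun x => by
    rw [abs_mul, Real.mul_rpow (abs_nonneg _) (abs_nonneg _), abs_of_pos hc0, hcp]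
  refine ⟨fun t => c * w t, ⟨Real.nnabs c * K, lipschitzOnWith_const_mul c hK⟩, ?_, ?_⟩
  · simp only [key]
    rw [intervalIntegral.integral_const_mul, inv_mul_cancel₀ hN.ne']
  · have hder : ∀ t, deriv (fun s => c * w s) t = c * deriv w t := fun t =>
      deriv_const_mul_field c
    simp only [hder, key]
    rw [intervalIntegral.integral_const_mul]
    ring

lemma lipschitzOnWith_reflect {R : ℝ} (hR : 0 < R) {v : ℝ → ℝ} {K : NNReal}
    (hK : LipschitzOnWith K v (Set.Icc 0 (2*R))) :
    LipschitzOnWith (K * 1) (fun t => v (2*R - t)) (Set.Icc 0 R) := by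
  have h1 : LipschitzWith 1 (fun t : ℝ => 2*R - t) := by
    apply LipschitzWith.of_dist_le_mul
    intro x y
    rw [Real.dist_eq, Real.dist_eq]
    simp only [NNReal.coe_one, one_mul]
    rw [show 2*R - x - (2*R - y) = -(x - y) by ring, abs_neg]
  have hmaps : Set.MapsTo (fun t : ℝ => 2*R - t) (Set.Icc 0 R) (Set.Icc 0 (2*R)) := by
    intro t ht
    simp only [Set.mem_Icc] at ht ⊢
    constructor <;> linarith [ht.1, ht.2]
  exact hK.comp (h1.lipschitzOnWith (s := Set.Icc 0 R)) hmaps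

lemma integral_reflect {R : ℝ} (f : ℝ → ℝ) :
    (∫ t in (0:ℝ)..R, f (2*R - t)) = ∫ s in R..(2*R), f s := by
  have h1 := intervalIntegral.integral_comp_sub_left (a := 0) (b := R) f (2*R)
  have h2 : 2*R - R = R := by ring
  rw [h2, sub_zero] at h1
  exact h1

lemma right_mem {p R α : ℝ} (hp : 1 < p) (hR : 0 < R) {v : ℝ → ℝ} {K : NNReal}
    (hK : LipschitzOnWith K v (Set.Icc 0 (2*R)))
    (hB : 0 < (∫ t in R..(2*R), |v t| ^ p)) :
    (∫ t in R..(2*R), |v t| ^ p)⁻¹ *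
      ((∫ t in R..(2*R), |deriv v t| ^ p) + α * |v (2*R)| ^ p) ∈
      {E : ℝ | ∃ u : ℝ → ℝ, (∃ K : NNReal, LipschitzOnWith K u (Set.Icc 0 R)) ∧
        (∫ t in (0:ℝ)..R, |u t| ^ p) = 1 ∧
        E = (∫ t in (0:ℝ)..R, |deriv u t| ^ p) + α * |u 0| ^ p} := by
  set w : ℝ → ℝ := fun t => v (2*R - t) with hwdef
  have hKw : LipschitzOnWith (K * 1) w (Set.Icc 0 R) := lipschitzOnWith_reflect hR hK
  have hnorm : (∫ t in (0:ℝ)..R, |w t| ^ p) = ∫ t in R..(2*R), |v t| ^ p :=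
    integral_reflect (fun s => |v s| ^ p)
  have hderiv : ∀ t, |deriv w t| ^ p = |deriv v (2*R - t)| ^ p := fun t => by
    rw [hwdef]
    rw [deriv_comp_const_sub, abs_neg]
  have hD : (∫ t in (0:ℝ)..R, |deriv w t| ^ p) = ∫ t in R..(2*R), |deriv v t| ^ p := by
    simp only [hderiv]
    exact integral_reflect (fun s => |deriv v s| ^ p)
  have hw0 : w 0 = v (2*R) := by simp [hwdef]
  have := normalized_mem (α := α) hp hR hKw (hnorm ▸ hB)
  rwa [hnorm, hD, hw0] at this

lemma exists_RN_le {p R α : ℝ} (hp : 1 < p) (hR : 0 < R) {E : ℝ}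
    (hE : E ∈ {E : ℝ | ∃ u : ℝ → ℝ, (∃ K : NNReal, LipschitzOnWith K u (Set.Icc 0 (2*R))) ∧
      (∫ t in (0:ℝ)..(2*R), |u t| ^ p) = 1 ∧
      E = (∫ t in (0:ℝ)..(2*R), |deriv u t| ^ p) + α * (|u 0| ^ p + |u (2*R)| ^ p)}) :
    ∃ E' ∈ {E : ℝ | ∃ u : ℝ → ℝ, (∃ K : NNReal, LipschitzOnWith K u (Set.Icc 0 R)) ∧
      (∫ t in (0:ℝ)..R, |u t| ^ p) = 1 ∧
      E = (∫ t in (0:ℝ)..R, |deriv u t| ^ p) + α * |u 0| ^ p}, E' ≤ E := by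
  obtain ⟨v, ⟨K, hK⟩, hnorm, hEeq⟩ := hE
  have hp0 : (0:ℝ) < p := by linarith
  have hp0' : p ≠ 0 := hp0.ne'
  have hR2 : R ≤ 2*R := by linarith
  have hR2' : (0:ℝ) ≤ R := hR.le
  set A := (∫ t in (0:ℝ)..R, |v t| ^ p) with hAdef
  set B := (∫ t in R..(2*R), |v t| ^ p) with hBdef
  set D₁ := (∫ t in (0:ℝ)..R, |deriv v t| ^ p) with hD1def
  set D₂ := (∫ t in R..(2*R), |deriv v t| ^ p) with hD2def
  have hvcont : ContinuousOn v (Set.Icc 0 (2*R)) := hK.continuousOn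
  have hgcont : ContinuousOn (fun t => |v t| ^ p) (Set.Icc 0 (2*R)) :=
    (hvcont.abs).rpow_const (fun x _ => Or.inr hp0.le)
  have i1 : IntervalIntegrable (fun t => |v t| ^ p) volume 0 R := by
    apply ContinuousOn.intervalIntegrable
    rw [Set.uIcc_of_le hR2']
    exact hgcont.mono (Set.Icc_subset_Icc le_rfl hR2)
  have i2 : IntervalIntegrable (fun t => |v t| ^ p) volume R (2*R) := by
    apply ContinuousOn.intervalIntegrable
    rw [Set.uIcc_of_le hR2]
    exact hgcont.mono (Set.Icc_subset_Icc hR2' le_rfl)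
  have hAB : A + B = 1 := by
    rw [hAdef, hBdef, intervalIntegral.integral_add_adjacent_intervals i1 i2]
    exact hnorm
  have j1 : IntervalIntegrable (fun t => |deriv v t| ^ p) volume 0 R :=
    intervalIntegrable_abs_deriv_rpow hp0.le hK le_rfl hR2' hR2
  have j2 : IntervalIntegrable (fun t => |deriv v t| ^ p) volume R (2*R) :=
    intervalIntegrable_abs_deriv_rpow hp0.le hK hR2' hR2 le_rfl
  have hD : (∫ t in (0:ℝ)..(2*R), |deriv v t| ^ p) = D₁ + D₂ :=
    (intervalIntegral.integral_add_adjacent_intervals j1 j2).symm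
  have hA0 : 0 ≤ A := intervalIntegral.integral_nonneg hR2' (fun t _ => Real.rpow_nonneg (abs_nonneg _) p)
  have hB0 : 0 ≤ B := intervalIntegral.integral_nonneg hR2 (fun t _ => Real.rpow_nonneg (abs_nonneg _) p)
  have hD10 : 0 ≤ D₁ := intervalIntegral.integral_nonneg hR2' (fun t _ => Real.rpow_nonneg (abs_nonneg _) p)
  have hD20 : 0 ≤ D₂ := intervalIntegral.integral_nonneg hR2 (fun t _ => Real.rpow_nonneg (abs_nonneg _) p)
  have hEeq' : E = D₁ + D₂ + α * (|v 0| ^ p + |v (2*R)| ^ p) := by rw [hEeq, hD]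
  rcases eq_or_lt_of_le hA0 with hA | hA
  · -- A = 0 : left half vanishes
    have hv0 : v 0 = 0 := by
      have := eq_zero_of_integral_abs_rpow_eq_zero hR hp0
        (hvcont.mono (Set.Icc_subset_Icc le_rfl hR2)) hA.symm
      exact this 0 ⟨le_rfl, hR2'⟩
    have hB1 : B = 1 := by linarith
    have hBpos : 0 < B := by rw [hB1]; norm_num
    refine ⟨B⁻¹ * (D₂ + α * |v (2*R)| ^ p), right_mem hp hR hK hBpos, ?_⟩
    have hzero : |v 0| ^ p = 0 := by rw [hv0, abs_zero, Real.zero_rpow hp0']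
    rw [hB1, inv_one, one_mul, hEeq', hzero]
    linarith
  · rcases eq_or_lt_of_le hB0 with hB | hB
    · -- B = 0 : right half vanishes
      have hv2R : v (2*R) = 0 := by
        have h2R : R < 2*R := by linarith
        have := eq_zero_of_integral_abs_rpow_eq_zero h2R hp0
          (hvcont.mono (Set.Icc_subset_Icc hR2' le_rfl)) hB.symm
        exact this (2*R) ⟨hR2, le_rfl⟩
      have hA1 : A = 1 := by linarith
      have hKR : LipschitzOnWith K v (Set.Icc 0 R) := hK.mono (Set.Icc_subset_Icc le_rfl hR2)
      have hApos : 0 < A := by rw [hA1]; norm_num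
      refine ⟨A⁻¹ * (D₁ + α * |v 0| ^ p), normalized_mem hp hR hKR hApos, ?_⟩
      have hzero : |v (2*R)| ^ p = 0 := by rw [hv2R, abs_zero, Real.zero_rpow hp0']
      rw [hA1, inv_one, one_mul, hEeq', hzero]
      linarith
    · -- both positive
      set E₁ := A⁻¹ * (D₁ + α * |v 0| ^ p) with hE1def
      set E₂ := B⁻¹ * (D₂ + α * |v (2*R)| ^ p) with hE2def
      have hKR : LipschitzOnWith K v (Set.Icc 0 R) := hK.mono (Set.Icc_subset_Icc le_rfl hR2)
      have hmem1 := normalized_mem (α := α) hp hR hKR hA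
      have hmem2 := right_mem (α := α) hp hR hK hB
      have hsum : E = A * E₁ + B * E₂ := by
        rw [hE1def, hE2def, ← mul_assoc, ← mul_assoc, mul_inv_cancel₀ hA.ne', mul_inv_cancel₀ hB.ne']
        rw [hEeq']; ring
      by_cases hcmp : E₁ ≤ E₂
      · refine ⟨E₁, hmem1, ?_⟩
        have h1 : B * E₁ ≤ B * E₂ := mul_le_mul_of_nonneg_left hcmp hB0
        have h2 : E₁ = A * E₁ + B * E₁ := by rw [← add_mul, hAB, one_mul]
        linarith
      · refine ⟨E₂, hmem2, ?_⟩
        have h1 : A * E₂ ≤ A * E₁ := mul_le_mul_of_nonneg_left (le_of_not_ge hcmp) hA0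
        have h2 : E₂ = A * E₂ + B * E₂ := by rw [← add_mul, hAB, one_mul]
        linarith

lemma integral_reflect' {R : ℝ} (f : ℝ → ℝ) :
    (∫ t in R..(2*R), f (2*R - t)) = ∫ s in (0:ℝ)..R, f s := by
  have h1 := intervalIntegral.integral_comp_sub_left (a := R) (b := 2*R) f (2*R)
  have h2 : 2*R - R = R := by ring
  rw [h2, sub_self] at h1
  exact h1

lemma RN_subset_RR {p R α : ℝ} (hp : 1 < p) (hR : 0 < R) :
    {E : ℝ | ∃ u : ℝ → ℝ, (∃ K : NNReal, LipschitzOnWith K u (Set.Icc 0 R)) ∧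
      (∫ t in (0:ℝ)..R, |u t| ^ p) = 1 ∧
      E = (∫ t in (0:ℝ)..R, |deriv u t| ^ p) + α * |u 0| ^ p} ⊆
    {E : ℝ | ∃ u : ℝ → ℝ, (∃ K : NNReal, LipschitzOnWith K u (Set.Icc 0 (2*R))) ∧
      (∫ t in (0:ℝ)..(2*R), |u t| ^ p) = 1 ∧
      E = (∫ t in (0:ℝ)..(2*R), |deriv u t| ^ p) + α * (|u 0| ^ p + |u (2*R)| ^ p)} := by
  rintro E ⟨u, ⟨K, hK⟩, hnorm, hEeq⟩
  have hp0 : (0:ℝ) < p := by linarith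
  have hp0' : p ≠ 0 := hp0.ne'
  have hR2 : R ≤ 2*R := by linarith
  have hR0 : (0:ℝ) ≤ R := hR.le
  have h2R0 : (0:ℝ) ≤ 2*R := by linarith
  set c := (2:ℝ) ^ (-(1/p)) with hcdef
  have hc0 : 0 < c := Real.rpow_pos_of_pos two_pos _
  have hcp : c ^ p = 2⁻¹ := rpow_neginv_rpow two_pos hp0'
  have key : ∀ x : ℝ, |c * x| ^ p = 2⁻¹ * |x| ^ p := fun x => by
    rw [abs_mul, Real.mul_rpow (abs_nonneg _) (abs_nonneg _), abs_of_pos hc0, hcp]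
  set σ : ℝ → ℝ := fun t => min t (2*R - t) with hσdef
  have hσ1 : LipschitzWith 1 σ := by
    have h2 : LipschitzWith 1 (fun t : ℝ => 2*R - t) := by
      apply LipschitzWith.of_dist_le_mul
      intro x y
      rw [Real.dist_eq, Real.dist_eq]
      simp only [NNReal.coe_one, one_mul]
      rw [show 2*R - x - (2*R - y) = -(x - y) by ring, abs_neg]
    simpa using LipschitzWith.min LipschitzWith.id h2
  have hmaps : Set.MapsTo σ (Set.Icc 0 (2*R)) (Set.Icc 0 R) := by
    intro t ht
    simp only [Set.mem_Icc] at ht ⊢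
    constructor
    · exact le_min ht.1 (by linarith [ht.2])
    · rcases le_total t R with h | h
      · exact le_trans (min_le_left _ _) h
      · exact le_trans (min_le_right _ _) (by linarith)
  set v : ℝ → ℝ := fun t => c * u (σ t) with hvdef
  have hKv : LipschitzOnWith (Real.nnabs c * (K * 1)) v (Set.Icc 0 (2*R)) :=
    lipschitzOnWith_const_mul c (hK.comp (hσ1.lipschitzOnWith (s := Set.Icc 0 (2*R))) hmaps)
  have hσ0 : σ 0 = 0 := by
    rw [hσdef]; simp only [sub_zero]; exact min_eq_left h2R0
  have hσ2R : σ (2*R) = 0 := by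
    rw [hσdef]; simp only []; rw [show 2*R - 2*R = 0 by ring]; exact min_eq_right h2R0
  have hv0 : v 0 = c * u 0 := by rw [hvdef]; simp only []; rw [hσ0]
  have hv2R : v (2*R) = c * u 0 := by rw [hvdef]; simp only []; rw [hσ2R]
  -- norm computation
  have hvcont : ContinuousOn v (Set.Icc 0 (2*R)) := hKv.continuousOn
  have hgcont : ContinuousOn (fun t => |v t| ^ p) (Set.Icc 0 (2*R)) :=
    (hvcont.abs).rpow_const (fun x _ => Or.inr hp0.le)
  have i1 : IntervalIntegrable (fun t => |v t| ^ p) volume 0 R := by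
    apply ContinuousOn.intervalIntegrable
    rw [Set.uIcc_of_le hR0]
    exact hgcont.mono (Set.Icc_subset_Icc le_rfl hR2)
  have i2 : IntervalIntegrable (fun t => |v t| ^ p) volume R (2*R) := by
    apply ContinuousOn.intervalIntegrable
    rw [Set.uIcc_of_le hR2]
    exact hgcont.mono (Set.Icc_subset_Icc hR0 le_rfl)
  have h1 : (∫ t in (0:ℝ)..R, |v t| ^ p) = 2⁻¹ * ∫ t in (0:ℝ)..R, |u t| ^ p := by
    rw [← intervalIntegral.integral_const_mul]
    apply intervalIntegral.integral_congr
    intro t ht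
    rw [Set.uIcc_of_le hR0] at ht
    have hσt : σ t = t := min_eq_left (by linarith [ht.1, ht.2])
    show |c * u (σ t)| ^ p = 2⁻¹ * |u t| ^ p
    rw [hσt, key]
  have h2 : (∫ t in R..(2*R), |v t| ^ p) = 2⁻¹ * ∫ t in (0:ℝ)..R, |u t| ^ p := by
    have step1 : (∫ t in R..(2*R), |v t| ^ p)
        = ∫ t in R..(2*R), 2⁻¹ * |u (2*R - t)| ^ p := by
      apply intervalIntegral.integral_congr
      intro t ht
      rw [Set.uIcc_of_le hR2] at ht
      have hσt : σ t = 2*R - t := min_eq_right (by linarith [ht.1, ht.2])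
      show |c * u (σ t)| ^ p = 2⁻¹ * |u (2*R - t)| ^ p
      rw [hσt, key]
    rw [step1, intervalIntegral.integral_const_mul, integral_reflect' (fun s => |u s| ^ p)]
  have hnormv : (∫ t in (0:ℝ)..(2*R), |v t| ^ p) = 1 := by
    rw [← intervalIntegral.integral_add_adjacent_intervals i1 i2, h1, h2, hnorm]
    norm_num
  -- derivative computation
  have hd1 : ∀ t : ℝ, t < R → deriv v t = c * deriv u t := by
    intro t ht
    have hev : v =ᶠ[nhds t] fun s => c * u s := by
      filter_upwards [Iio_mem_nhds ht] with s hs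
      have : σ s = s := min_eq_left (by simp only [Set.mem_Iio] at hs; linarith)
      show c * u (σ s) = c * u s
      rw [this]
    rw [hev.deriv_eq, deriv_const_mul_field]
  have hd2 : ∀ t : ℝ, R < t → deriv v t = c * (-deriv u (2*R - t)) := by
    intro t ht
    have hev : v =ᶠ[nhds t] fun s => c * u (2*R - s) := by
      filter_upwards [Ioi_mem_nhds ht] with s hs
      have : σ s = 2*R - s := min_eq_right (by simp only [Set.mem_Ioi] at hs; linarith)
      show c * u (σ s) = c * u (2*R - s)
      rw [this]
    rw [hev.deriv_eq, deriv_const_mul_field, deriv_comp_const_sub]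
  have j1 : IntervalIntegrable (fun t => |deriv v t| ^ p) volume 0 R :=
    intervalIntegrable_abs_deriv_rpow hp0.le hKv le_rfl hR0 hR2
  have j2 : IntervalIntegrable (fun t => |deriv v t| ^ p) volume R (2*R) :=
    intervalIntegrable_abs_deriv_rpow hp0.le hKv hR0 hR2 le_rfl
  have k1 : (∫ t in (0:ℝ)..R, |deriv v t| ^ p) = 2⁻¹ * ∫ t in (0:ℝ)..R, |deriv u t| ^ p := by
    rw [← intervalIntegral.integral_const_mul]
    apply intervalIntegral.integral_congr_ae
    have hae : ∀ᵐ t ∂(volume : Measure ℝ), t ≠ R :=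
      (ae_iff).mpr (by simpa using measure_singleton (α := ℝ) R)
    filter_upwards [hae] with t htR ht
    rw [Set.uIoc_of_le hR0] at ht
    have htlt : t < R := lt_of_le_of_ne ht.2 htR
    rw [hd1 t htlt, key]
  have k2 : (∫ t in R..(2*R), |deriv v t| ^ p) = 2⁻¹ * ∫ t in (0:ℝ)..R, |deriv u t| ^ p := by
    have step1 : (∫ t in R..(2*R), |deriv v t| ^ p)
        = ∫ t in R..(2*R), 2⁻¹ * |deriv u (2*R - t)| ^ p := by
      apply intervalIntegral.integral_congr_ae
      filter_upwards with t ht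
      rw [Set.uIoc_of_le hR2] at ht
      rw [hd2 t ht.1, key, abs_neg]
    rw [step1, intervalIntegral.integral_const_mul, integral_reflect' (fun s => |deriv u s| ^ p)]
  have hDv : (∫ t in (0:ℝ)..(2*R), |deriv v t| ^ p) = ∫ t in (0:ℝ)..R, |deriv u t| ^ p := by
    rw [← intervalIntegral.integral_add_adjacent_intervals j1 j2, k1, k2]
    ring
  refine ⟨v, ⟨_, hKv⟩, hnormv, ?_⟩
  rw [hDv, hv0, hv2R, key]
  rw [hEeq]
  ring

lemma RN_nonempty {p R α : ℝ} (hp : 1 < p) (hR : 0 < R) :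
    {E : ℝ | ∃ u : ℝ → ℝ, (∃ K : NNReal, LipschitzOnWith K u (Set.Icc 0 R)) ∧
      (∫ t in (0:ℝ)..R, |u t| ^ p) = 1 ∧
      E = (∫ t in (0:ℝ)..R, |deriv u t| ^ p) + α * |u 0| ^ p}.Nonempty := by
  have hp0 : (0:ℝ) < p := by linarith
  set c := R ^ (-(1/p)) with hcdef
  have hc0 : 0 < c := Real.rpow_pos_of_pos hR _
  have hcp : c ^ p = R⁻¹ := rpow_neginv_rpow hR hp0.ne'
  refine ⟨_, fun _ => c, ⟨0, (LipschitzWith.const c).lipschitzOnWith⟩, ?_, rfl⟩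
  rw [intervalIntegral.integral_const, abs_of_pos hc0, hcp]
  simp only [sub_zero, smul_eq_mul]
  exact mul_inv_cancel₀ hR.ne'

/-- `μₚ([0,2R],α) = λ̄ₚ([0,R],1,α)`. -/
theorem robinRobinEig_eq_robinNeumannEig (p R α : ℝ) (hp : 1 < p) (hR : 0 < R) :
    robinRobinEig p (2 * R) α = robinNeumannEig p R α := by
  unfold robinRobinEig robinNeumannEig
  have hsub := RN_subset_RR (α := α) hp hR
  have hdom := fun E hE => exists_RN_le (α := α) hp hR (E := E) hE
  obtain ⟨E0, hE0⟩ := RN_nonempty (α := α) hp hR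
  have hne2 : Set.Nonempty {E : ℝ | ∃ u : ℝ → ℝ,
      (∃ K : NNReal, LipschitzOnWith K u (Set.Icc 0 (2*R))) ∧
      (∫ t in (0:ℝ)..(2*R), |u t| ^ p) = 1 ∧
      E = (∫ t in (0:ℝ)..(2*R), |deriv u t| ^ p) + α * (|u 0| ^ p + |u (2*R)| ^ p)} :=
    ⟨E0, hsub hE0⟩
  by_cases hbdd : BddBelow {E : ℝ | ∃ u : ℝ → ℝ,
      (∃ K : NNReal, LipschitzOnWith K u (Set.Icc 0 R)) ∧
      (∫ t in (0:ℝ)..R, |u t| ^ p) = 1 ∧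
      E = (∫ t in (0:ℝ)..R, |deriv u t| ^ p) + α * |u 0| ^ p}
  · obtain ⟨m, hm⟩ := hbdd
    have hbdd2 : BddBelow {E : ℝ | ∃ u : ℝ → ℝ,
        (∃ K : NNReal, LipschitzOnWith K u (Set.Icc 0 (2*R))) ∧
        (∫ t in (0:ℝ)..(2*R), |u t| ^ p) = 1 ∧
        E = (∫ t in (0:ℝ)..(2*R), |deriv u t| ^ p) + α * (|u 0| ^ p + |u (2*R)| ^ p)} := by
      refine ⟨m, fun E hE => ?_⟩
      obtain ⟨E', hE', hle⟩ := hdom E hE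
      exact le_trans (hm hE') hle
    apply le_antisymm
    · exact csInf_le_csInf hbdd2 ⟨E0, hE0⟩ hsub
    · apply le_csInf hne2
      intro E hE
      obtain ⟨E', hE', hle⟩ := hdom E hE
      exact le_trans (csInf_le ⟨m, hm⟩ hE') hle
  · have hbdd2 : ¬BddBelow {E : ℝ | ∃ u : ℝ → ℝ,
        (∃ K : NNReal, LipschitzOnWith K u (Set.Icc 0 (2*R))) ∧
        (∫ t in (0:ℝ)..(2*R), |u t| ^ p) = 1 ∧
        E = (∫ t in (0:ℝ)..(2*R), |deriv u t| ^ p) + α * (|u 0| ^ p + |u (2*R)| ^ p)} :=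
      fun h => hbdd (h.mono hsub)
    rw [Real.sInf_of_not_bddBelow hbdd, Real.sInf_of_not_bddBelow hbdd2]
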